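/- Let X₀, X₁, ..., Xₙ be real random variables with X₀ fixed, and suppose there exist positive reals c₁,...,cₙ and b₁,...,bₙ such that |Xₖ - Xₖ₋₁| ≤ cₖ almost surely and E[Xₖ - Xₖ₋₁ | X₀,...,Xₖ₋₁] ≤ bₖ for each 1 ≤ k ≤ n. Then for every x > 0, P(∃ t, 0 ≤ t ≤ n, X_t - X₀ > Σ_{k=1}^{t} bₖ + x) ≤ exp(-x² / (2 Σ_{k=1}^{n} cₖ²)). -/

import Mathlib

open MeasureTheory Finset Real

lemma aux_sinh_le (s : ℝ) (hs : 0 ≤ s) : Real.sinh s ≤ s * Real.exp (s ^ 2 / 2) := by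
  rw [Real.sinh_eq_tsum, Real.exp_eq_exp_ℝ, NormedSpace.exp_eq_tsum ℝ, ← tsum_mul_left]
  refine Summable.tsum_le_tsum (fun i => ?_) (Real.hasSum_sinh s).summable
    ((NormedSpace.expSeries_summable' (𝕂 := ℝ) (s ^ 2 / 2)).mul_left s)
  have hfac : ((2 ^ i * Nat.factorial i : ℕ) : ℝ) ≤ ((2 * i + 1).factorial : ℝ) := by
    norm_cast
    calc 2 ^ i * Nat.factorial i ≤ (2 * i).factorial :=
          Nat.two_pow_mul_factorial_le_factorial_two_mul _
    _ ≤ (2 * i + 1).factorial := Nat.factorial_le (by omega)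
  have h2 : s * ((Nat.factorial i : ℝ)⁻¹ • (s ^ 2 / 2) ^ i) =
      s ^ (2 * i + 1) / ((2 ^ i * Nat.factorial i : ℕ) : ℝ) := by
    rw [smul_eq_mul, div_pow, pow_add, pow_mul, pow_one]
    push_cast
    have : (Nat.factorial i : ℝ) ≠ 0 := by positivity
    field_simp
  rw [h2]
  have hpos : (0:ℝ) < ((2 ^ i * Nat.factorial i : ℕ) : ℝ) := by positivity
  exact div_le_div_of_nonneg_left (by positivity) hpos hfac

lemma aux_chord (l c d : ℝ) (hc : 0 < c) (hd : |d| ≤ c) :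
    Real.exp (l * d) ≤ Real.cosh (l * c) + (d / c) * Real.sinh (l * c) := by
  rw [abs_le] at hd
  set θ : ℝ := (c - d) / (2 * c) with hθ
  have h1 : 0 ≤ θ := by
    apply div_nonneg <;> nlinarith [hd.1, hd.2]
  have h2 : 0 ≤ 1 - θ := by
    rw [hθ]; rw [sub_nonneg, div_le_one (by positivity)]; nlinarith [hd.1]
  have key := convexOn_exp.2 (Set.mem_univ (-(l * c))) (Set.mem_univ (l * c)) h1 h2 (by ring)
  simp only [smul_eq_mul] at key
  have harg : θ * (-(l * c)) + (1 - θ) * (l * c) = l * d := by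
    rw [hθ]; field_simp; ring
  rw [harg] at key
  refine key.trans (le_of_eq ?_)
  rw [Real.cosh_eq, Real.sinh_eq]
  rw [hθ]; field_simp
  ring

lemma aux_combine (l c b : ℝ) (hc : 0 < c) (hl : 0 < l) (hb : 0 < b) :
    Real.cosh (l * c) + (b / c) * Real.sinh (l * c) ≤ Real.exp (l * b + l ^ 2 * c ^ 2 / 2) := by
  have h1 : Real.cosh (l * c) ≤ Real.exp (l ^ 2 * c ^ 2 / 2) := by
    have := Real.cosh_le_exp_half_sq (l * c)
    rwa [mul_pow] at this
  have h2 : Real.sinh (l * c) ≤ (l * c) * Real.exp (l ^ 2 * c ^ 2 / 2) := by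
    have := aux_sinh_le (l * c) (by positivity)
    rwa [mul_pow] at this
  have h3 : (b / c) * Real.sinh (l * c) ≤ (b * l) * Real.exp (l ^ 2 * c ^ 2 / 2) := by
    calc (b / c) * Real.sinh (l * c) ≤ (b / c) * ((l * c) * Real.exp (l ^ 2 * c ^ 2 / 2)) := by
          apply mul_le_mul_of_nonneg_left h2 (by positivity)
    _ = (b * l) * Real.exp (l ^ 2 * c ^ 2 / 2) := by field_simp
  calc Real.cosh (l * c) + (b / c) * Real.sinh (l * c)
      ≤ Real.exp (l ^ 2 * c ^ 2 / 2) + (b * l) * Real.exp (l ^ 2 * c ^ 2 / 2) :=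
        add_le_add h1 h3
    _ = (1 + l * b) * Real.exp (l ^ 2 * c ^ 2 / 2) := by ring
    _ ≤ Real.exp (l * b) * Real.exp (l ^ 2 * c ^ 2 / 2) := by
        apply mul_le_mul_of_nonneg_right _ (Real.exp_nonneg _)
        have := Real.add_one_le_exp (l * b)
        linarith
    _ = Real.exp (l * b + l ^ 2 * c ^ 2 / 2) := (Real.exp_add _ _).symm

theorem stmt_9 {Ω : Type*} [MeasurableSpace Ω] (μ : Measure Ω) [IsProbabilityMeasure μ]
    (n : ℕ) (X : ℕ → Ω → ℝ) (c b : ℕ → ℝ)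
    (hc : ∀ k ∈ Finset.Icc 1 n, 0 < c k) (hb : ∀ k ∈ Finset.Icc 1 n, 0 < b k)
    (hmeas : ∀ k, Measurable (X k))
    (hbdd : ∀ k ∈ Finset.Icc 1 n, ∀ᵐ ω ∂μ, |X k ω - X (k - 1) ω| ≤ c k)
    (hcond : ∀ k ∈ Finset.Icc 1 n,
      μ[fun ω => X k ω - X (k - 1) ω |
        MeasurableSpace.comap (fun ω => fun i : Fin k => X i ω) inferInstance]
        ≤ᵐ[μ] fun _ => b k)
    (x : ℝ) (hx : 0 < x) :
    (μ {ω | ∃ t ≤ n, X t ω - X 0 ω > (∑ k ∈ Finset.Icc 1 t, b k) + x}).toReal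
      ≤ Real.exp (-x ^ 2 / (2 * ∑ k ∈ Finset.Icc 1 n, c k ^ 2)) := by
  have htriv : ∀ s : Set Ω, (μ s).toReal ≤ 1 := fun s => by
    simpa using ENNReal.toReal_mono ENNReal.one_ne_top prob_le_one
  rcases Nat.eq_zero_or_pos n with hn | hn
  · subst hn
    rw [show Finset.Icc 1 0 = (∅ : Finset ℕ) from Finset.Icc_eq_empty (by omega)]
    rw [Finset.sum_empty, mul_zero, div_zero, Real.exp_zero]
    exact htriv _
  -- main case
  set S : ℝ := ∑ k ∈ Finset.Icc 1 n, c k ^ 2 with hS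
  have hS0 : 0 < S := Finset.sum_pos (fun k hk => pow_pos (hc k hk) 2)
    ⟨1, Finset.mem_Icc.mpr ⟨le_refl 1, hn⟩⟩
  set l : ℝ := x / S with hl
  have hl0 : 0 < l := div_pos hx hS0
  -- filtration
  set 𝒢 : Filtration ℕ ‹MeasurableSpace Ω› :=
    { seq := fun k => MeasurableSpace.comap (fun ω => fun p : Fin (k + 1) => X p ω) inferInstance
      mono' := by
        intro i j hij
        show MeasurableSpace.comap (fun ω => fun p : Fin (i + 1) => X p ω) inferInstance ≤
          MeasurableSpace.comap (fun ω => fun p : Fin (j + 1) => X p ω) inferInstance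
        have hcomp : (fun ω => fun p : Fin (i + 1) => X p ω) =
            (fun (g : Fin (j + 1) → ℝ) => fun p : Fin (i + 1) => g (Fin.castLE (by omega) p)) ∘
              (fun ω => fun p : Fin (j + 1) => X p ω) := rfl
        rw [hcomp, ← MeasurableSpace.comap_comp]
        exact MeasurableSpace.comap_mono
          (measurable_pi_lambda _ fun p => measurable_pi_apply _).comap_le
      le' := fun k =>
        (measurable_pi_lambda (fun ω => fun p : Fin (k + 1) => X p ω)
          fun p => hmeas p).comap_le } with h𝒢
  have hG : ∀ i : ℕ, (𝒢 i : MeasurableSpace Ω) =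
      MeasurableSpace.comap (fun ω => fun p : Fin (i + 1) => X p ω) inferInstance := fun _ => rfl
  have hXmeasG : ∀ i k : ℕ, i ≤ k → Measurable[𝒢 k] (X i) := by
    intro i k hik
    have hvec : Measurable[𝒢 k] (fun ω => fun p : Fin (k + 1) => X p ω) :=
      Measurable.of_comap_le (hG k).le
    exact (measurable_pi_apply (⟨i, by omega⟩ : Fin (k + 1))).comp hvec
  -- telescoping
  have tele : ∀ (t : ℕ) (ω : Ω),
      ∑ k ∈ Finset.Icc 1 t, (X k ω - X (k - 1) ω) = X t ω - X 0 ω := by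
    intro t ω
    induction t with
    | zero => simp
    | succ t ih =>
      rw [Finset.sum_Icc_succ_top (by omega : 1 ≤ t + 1), ih]
      simp
  have habs : ∀ t : ℕ, t ≤ n → ∀ᵐ ω ∂μ, |X t ω - X 0 ω| ≤ ∑ k ∈ Finset.Icc 1 t, c k := by
    intro t ht
    have h := (Filter.eventually_all_finset (Finset.Icc 1 t)).2
      (fun k hk => hbdd k (Finset.mem_Icc.mpr
        ⟨(Finset.mem_Icc.mp hk).1, le_trans (Finset.mem_Icc.mp hk).2 ht⟩))
    filter_upwards [h] with ω hω
    rw [← tele t ω]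
    exact (Finset.abs_sum_le_sum_abs _ _).trans (Finset.sum_le_sum fun k hk => hω k hk)
  -- exponential supermartingale
  set F : ℕ → Ω → ℝ := fun t ω =>
    Real.exp (l * (X t ω - X 0 ω - ∑ k ∈ Finset.Icc 1 t, b k)
      - l ^ 2 / 2 * ∑ k ∈ Finset.Icc 1 t, c k ^ 2) with hF
  set M : ℕ → Ω → ℝ := fun t => F (min t n) with hM
  have hFmeasG : ∀ t : ℕ, Measurable[𝒢 t] (F t) := by
    intro t
    exact (((((hXmeasG t t le_rfl).sub (hXmeasG 0 t (Nat.zero_le _))).sub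
      measurable_const).const_mul l).sub measurable_const).exp
  have hFmeas0 : ∀ t : ℕ, Measurable (F t) := fun t => (hFmeasG t).mono (𝒢.le t) le_rfl
  have hFpos : ∀ (t : ℕ) (ω : Ω), 0 < F t ω := fun t ω => Real.exp_pos _
  have hFint : ∀ t : ℕ, t ≤ n → Integrable (F t) μ := by
    intro t ht
    refine Integrable.mono' (integrable_const (Real.exp (l * ((∑ k ∈ Finset.Icc 1 t, c k)
      - ∑ k ∈ Finset.Icc 1 t, b k) - l ^ 2 / 2 * ∑ k ∈ Finset.Icc 1 t, c k ^ 2)))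
      (hFmeas0 t).aestronglyMeasurable ?_
    filter_upwards [habs t ht] with ω hω
    rw [Real.norm_eq_abs, abs_of_pos (hFpos t ω)]
    apply Real.exp_le_exp.2
    have h2 : X t ω - X 0 ω ≤ ∑ k ∈ Finset.Icc 1 t, c k := (abs_le.mp hω).2
    nlinarith [mul_le_mul_of_nonneg_left h2 hl0.le]
  have hMint : ∀ t : ℕ, Integrable (M t) μ := fun t => hFint (min t n) (min_le_right _ _)
  have hMadp : StronglyAdapted 𝒢 M := fun t =>
    ((hFmeasG (min t n)).mono (𝒢.mono (min_le_left t n)) le_rfl).stronglyMeasurable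
  -- supermartingale property
  have hstep : ∀ i : ℕ, μ[M (i + 1)|𝒢 i] ≤ᵐ[μ] M i := by
    intro i
    rcases le_or_gt n i with hni | hni
    · -- constant case
      have h1 : min (i + 1) n = n := by omega
      have h2 : min i n = n := by omega
      have : M (i + 1) = M i := by rw [hM]; simp only [h1, h2]
      rw [this]
      have hsm : StronglyMeasurable[𝒢 i] (M i) := (hMadp i).mono (𝒢.mono (le_refl i))
      rw [condExp_of_stronglyMeasurable (𝒢.le i) hsm (hMint i)]
    · -- genuine step
      have h1 : min (i + 1) n = i + 1 := by omega
      have h2 : min i n = i := by omega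
      have hMi1 : M (i + 1) = F (i + 1) := by rw [hM]; simp only [h1]
      have hMi : M i = F i := by rw [hM]; simp only [h2]
      rw [hMi1, hMi]
      have memi : i + 1 ∈ Finset.Icc 1 n := Finset.mem_Icc.mpr ⟨by omega, by omega⟩
      set cc := c (i + 1) with hcc
      set bb := b (i + 1) with hbb
      have hcc0 : 0 < cc := hc _ memi
      have hbb0 : 0 < bb := hb _ memi
      have hbdd' : ∀ᵐ ω ∂μ, |X (i + 1) ω - X i ω| ≤ cc := by
        have := hbdd (i + 1) memi
        simpa using this
      set Δ : Ω → ℝ := fun ω => X (i + 1) ω - X i ω with hΔ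
      have hΔmeas : Measurable Δ := (hmeas (i + 1)).sub (hmeas i)
      have hΔint : Integrable Δ μ := by
        refine Integrable.mono' (integrable_const cc) hΔmeas.aestronglyMeasurable ?_
        filter_upwards [hbdd'] with ω hω using by rwa [Real.norm_eq_abs]
      set g : Ω → ℝ := fun ω => Real.exp (l * Δ ω) with hg
      have hgmeas : Measurable g := (hΔmeas.const_mul l).exp
      have hgint : Integrable g μ := by
        refine Integrable.mono' (integrable_const (Real.exp (l * cc)))
          hgmeas.aestronglyMeasurable ?_
        filter_upwards [hbdd'] with ω hω
        rw [Real.norm_eq_abs, abs_of_pos (Real.exp_pos _)]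
        exact Real.exp_le_exp.2 (mul_le_mul_of_nonneg_left ((abs_le.mp hω).2) hl0.le)
      set κ : ℝ := Real.exp (-(l * bb) - l ^ 2 / 2 * cc ^ 2) with hκ
      have hsplit : F (i + 1) = (fun ω => F i ω * κ) * g := by
        funext ω
        simp only [Pi.mul_apply, hF, hκ, hg, hΔ]
        rw [← Real.exp_add, ← Real.exp_add]
        congr 1
        rw [Finset.sum_Icc_succ_top (by omega : 1 ≤ i + 1) b,
          Finset.sum_Icc_succ_top (by omega : 1 ≤ i + 1) (fun k => c k ^ 2)]
        ring
      -- conditional bound on g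
      have hcondΔ : μ[Δ|𝒢 i] ≤ᵐ[μ] fun _ => bb := by
        have h := hcond (i + 1) memi
        have heq : (fun ω => X (i + 1) ω - X (i + 1 - 1) ω) = Δ := by
          funext ω; simp [hΔ]
        rw [heq] at h
        exact h
      set r : ℝ := Real.sinh (l * cc) / cc with hr
      have hr0 : 0 ≤ r := div_nonneg (by
        have : 0 < Real.sinh (l * cc) := Real.sinh_pos_iff.2 (by positivity)
        linarith) hcc0.le
      have hgbound : g ≤ᵐ[μ] (fun _ => Real.cosh (l * cc)) + r • Δ := by
        filter_upwards [hbdd'] with ω hω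
        have h := aux_chord l cc (Δ ω) hcc0 hω
        simp only [Pi.add_apply, Pi.smul_apply, smul_eq_mul]
        calc g ω ≤ Real.cosh (l * cc) + (Δ ω / cc) * Real.sinh (l * cc) := h
          _ = Real.cosh (l * cc) + r * Δ ω := by rw [hr]; ring
      have hrhs_int : Integrable ((fun _ : Ω => Real.cosh (l * cc)) + r • Δ) μ :=
        (integrable_const _).add (hΔint.smul r)
      have hcexp_g : μ[g|𝒢 i] ≤ᵐ[μ] fun _ => Real.exp (l * bb + l ^ 2 * cc ^ 2 / 2) := by
        have h1 : μ[g|𝒢 i] ≤ᵐ[μ] μ[(fun _ : Ω => Real.cosh (l * cc)) + r • Δ|𝒢 i] :=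
          condExp_mono hgint hrhs_int hgbound
        have h2 : μ[(fun _ : Ω => Real.cosh (l * cc)) + r • Δ|𝒢 i]
            =ᵐ[μ] (fun _ => Real.cosh (l * cc)) + r • μ[Δ|𝒢 i] := by
          refine (condExp_add (integrable_const _) (hΔint.smul r) _).trans ?_
          refine Filter.EventuallyEq.add ?_ (condExp_smul r Δ _)
          rw [condExp_const (𝒢.le i)]
        have h3 : (fun _ : Ω => Real.cosh (l * cc)) + r • μ[Δ|𝒢 i]
            ≤ᵐ[μ] fun _ => Real.exp (l * bb + l ^ 2 * cc ^ 2 / 2) := by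
          filter_upwards [hcondΔ] with ω hω
          simp only [Pi.add_apply, Pi.smul_apply, smul_eq_mul]
          have h4 : r * (μ[Δ|𝒢 i]) ω ≤ r * bb := mul_le_mul_of_nonneg_left hω hr0
          have h5 := aux_combine l cc bb hcc0 hl0 hbb0
          rw [hr] at h4 ⊢
          calc Real.cosh (l * cc) + Real.sinh (l * cc) / cc * (μ[Δ|𝒢 i]) ω
              ≤ Real.cosh (l * cc) + Real.sinh (l * cc) / cc * bb := by linarith
            _ = Real.cosh (l * cc) + (bb / cc) * Real.sinh (l * cc) := by ring
            _ ≤ Real.exp (l * bb + l ^ 2 * cc ^ 2 / 2) := h5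
        exact h1.trans (h2.trans_le h3)
      -- pull-out
      have hfactor : StronglyMeasurable[𝒢 i] (fun ω => F i ω * κ) :=
        ((hFmeasG i).mul_const κ).stronglyMeasurable
      have hFi1int : Integrable ((fun ω => F i ω * κ) * g) μ := by
        rw [← hsplit]; exact hFint (i + 1) (by omega)
      have hpull := condExp_mul_of_stronglyMeasurable_left hfactor hFi1int hgint
      rw [hsplit]
      refine hpull.trans_le ?_
      filter_upwards [hcexp_g] with ω hω
      simp only [Pi.mul_apply]
      have hpos : 0 ≤ F i ω * κ := by positivity
      calc F i ω * κ * (μ[g|𝒢 i]) ω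
          ≤ F i ω * κ * Real.exp (l * bb + l ^ 2 * cc ^ 2 / 2) :=
            mul_le_mul_of_nonneg_left hω hpos
        _ = F i ω := by
            rw [mul_assoc, hκ, ← Real.exp_add]
            have : -(l * bb) - l ^ 2 / 2 * cc ^ 2 + (l * bb + l ^ 2 * cc ^ 2 / 2) = 0 := by ring
            rw [this, Real.exp_zero, mul_one]
  have hsup : Supermartingale M 𝒢 μ := supermartingale_nat hMadp hMint hstep
  -- maximal inequality
  set a : ℝ := Real.exp (l * x - l ^ 2 / 2 * S) with ha
  have ha0 : 0 < a := Real.exp_pos _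
  set A : Set Ω := {ω | ∃ j ≤ n, a ≤ M j ω} with hA
  have hMmeas0 : ∀ t : ℕ, Measurable (M t) := fun t => (hFmeas0 (min t n))
  have hAmeas : MeasurableSet A := by
    have : A = ⋃ j ∈ Set.Iic n, (M j) ⁻¹' (Set.Ici a) := by
      ext ω; simp [hA, Set.mem_iUnion]
    rw [this]
    exact MeasurableSet.biUnion (Set.to_countable _)
      (fun j _ => (hMmeas0 j) measurableSet_Ici)
  have hsubset : {ω | ∃ t ≤ n, X t ω - X 0 ω > (∑ k ∈ Finset.Icc 1 t, b k) + x} ⊆ A := by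
    rintro ω ⟨t, ht, hgt⟩
    refine ⟨t, ht, ?_⟩
    have hmt : min t n = t := min_eq_left ht
    have hMt : M t ω = F t ω := by rw [hM]; simp only [hmt]
    rw [hMt, hF]
    have hst : (∑ k ∈ Finset.Icc 1 t, c k ^ 2) ≤ S := by
      rw [hS]
      exact Finset.sum_le_sum_of_subset_of_nonneg
        (Finset.Icc_subset_Icc_right ht) (fun k _ _ => sq_nonneg _)
    apply Real.exp_le_exp.2
    have h1 : x ≤ X t ω - X 0 ω - ∑ k ∈ Finset.Icc 1 t, b k := by linarith
    have h2 : l * x ≤ l * (X t ω - X 0 ω - ∑ k ∈ Finset.Icc 1 t, b k) :=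
      mul_le_mul_of_nonneg_left h1 hl0.le
    nlinarith [sq_nonneg l]
  set τ : Ω → WithTop ℕ := fun ω => (hittingBtwn M (Set.Ici a) 0 n ω : ℕ) with hτdef
  have hτ : IsStoppingTime 𝒢 τ := Adapted.isStoppingTime_hittingBtwn (fun t => (hMadp t).measurable) measurableSet_Ici
  have hτle : ∀ ω, τ ω ≤ n := fun ω => WithTop.coe_le_coe.2 (hittingBtwn_le ω)
  have hsv_int : Integrable (stoppedValue M τ) μ :=
    integrable_stoppedValue ℕ hτ hMint hτle
  have hsv_ge : ∀ ω ∈ A, a ≤ stoppedValue M τ ω := by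
    rintro ω ⟨j, hj, hja⟩
    exact stoppedValue_hittingBtwn_mem ⟨j, ⟨Set.mem_Icc.mpr ⟨Nat.zero_le _, hj⟩, hja⟩⟩
  have hsv_nonneg : ∀ ω, 0 ≤ stoppedValue M τ ω := fun ω => (hFpos _ ω).le
  have step1 : a * (μ A).toReal ≤ ∫ ω in A, stoppedValue M τ ω ∂μ := by
    have := setIntegral_ge_of_const_le hAmeas (measure_ne_top μ A) hsv_ge hsv_int.integrableOn
    rw [smul_eq_mul, mul_comm] at this; exact this
  have step2 : ∫ ω in A, stoppedValue M τ ω ∂μ ≤ ∫ ω, stoppedValue M τ ω ∂μ :=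
    setIntegral_le_integral hsv_int (Filter.Eventually.of_forall hsv_nonneg)
  have step3 : ∫ ω, stoppedValue M τ ω ∂μ ≤ 1 := by
    have hneg := hsup.neg.expected_stoppedValue_mono (isStoppingTime_const 𝒢 0) hτ
      (fun ω => WithTop.coe_le_coe.2 (Nat.zero_le _)) hτle
    have he1 : stoppedValue (-M) (fun _ => (WithTop.some (0 : ℕ) : WithTop ℕ)) = fun ω => -(M 0 ω) := rfl
    have he2 : stoppedValue (-M) τ = fun ω => -(stoppedValue M τ ω) := rfl
    rw [he1, he2, integral_neg, integral_neg, neg_le_neg_iff] at hneg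
    have hM0 : M 0 = fun _ => (1 : ℝ) := by
      funext ω
      show F (min 0 n) ω = 1
      rw [show min 0 n = 0 by omega]
      simp [hF, show Finset.Icc 1 0 = (∅ : Finset ℕ) from Finset.Icc_eq_empty (by omega)]
    rw [hM0] at hneg
    simpa using hneg
  have hμA : (μ A).toReal ≤ 1 / a := by
    rw [le_div_iff₀ ha0]
    calc (μ A).toReal * a = a * (μ A).toReal := mul_comm _ _
      _ ≤ 1 := step1.trans (step2.trans step3)
  calc (μ {ω | ∃ t ≤ n, X t ω - X 0 ω > (∑ k ∈ Finset.Icc 1 t, b k) + x}).toReal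
      ≤ (μ A).toReal := ENNReal.toReal_mono (measure_ne_top μ A) (measure_mono hsubset)
    _ ≤ 1 / a := hμA
    _ = Real.exp (-x ^ 2 / (2 * S)) := by
        rw [ha, one_div, ← Real.exp_neg]
        congr 1
        rw [hl]
        field_simp
        ring
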